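/- The function U(z,t) = (t² + (1+|z|²)²)^{−1/2} satisfies ∫_{ℂ×ℝ} U³ = 2π, where the integral is with respect to Lebesgue measure on ℂ×ℝ ≅ ℝ³. -/

import Mathlib

open MeasureTheory Real Set Filter

/-- The Jerison–Lee bubble `U(z,t) = (t² + (1+|z|²)²)^{-1/2}` on `H¹ = ℂ × ℝ`. -/
noncomputable def jerisonLeeBubble (p : ℂ × ℝ) : ℝ :=
  (p.2 ^ 2 + (1 + ‖p.1‖ ^ 2) ^ 2) ^ (-(1 / 2 : ℝ))

lemma hderiv_aux {a : ℝ} (ha : 0 < a) (x : ℝ) :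
    HasDerivAt (fun t : ℝ => (a ^ 2)⁻¹ * (t / Real.sqrt (t ^ 2 + a ^ 2)))
      ((x ^ 2 + a ^ 2) ^ (-(3 / 2) : ℝ)) x := by
  have hpos : 0 < x ^ 2 + a ^ 2 := by positivity
  set s := Real.sqrt (x ^ 2 + a ^ 2) with hs
  have hspos : 0 < s := Real.sqrt_pos.2 hpos
  have hs2 : s ^ 2 = x ^ 2 + a ^ 2 := Real.sq_sqrt hpos.le
  have h1 : HasDerivAt (fun t : ℝ => t ^ 2 + a ^ 2) (2 * x) x := by
    simpa using (hasDerivAt_pow 2 x).add_const (a ^ 2)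
  have hsq : HasDerivAt (fun t : ℝ => Real.sqrt (t ^ 2 + a ^ 2)) (x / s) x := by
    have := (Real.hasDerivAt_sqrt hpos.ne').comp x h1
    refine this.congr_deriv (Eq.symm ?_)
    field_simp
    ring
  have hdiv : HasDerivAt (fun t : ℝ => t / Real.sqrt (t ^ 2 + a ^ 2))
      ((1 * s - x * (x / s)) / s ^ 2) x := (hasDerivAt_id x).div hsq hspos.ne'
  have h2 := hdiv.const_mul ((a ^ 2)⁻¹)
  refine h2.congr_deriv (Eq.symm ?_)
  have hcube : s ^ 3 = (x ^ 2 + a ^ 2) ^ ((3 : ℝ) / 2) := by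
    rw [hs, Real.sqrt_eq_rpow, ← Real.rpow_natCast _ 3, ← Real.rpow_mul hpos.le]
    norm_num
  rw [Real.rpow_neg hpos.le, ← hcube]
  field_simp
  linear_combination (-1) * hs2

lemma tendsto_aux {a : ℝ} (ha : 0 < a) :
    Tendsto (fun t : ℝ => (a ^ 2)⁻¹ * (t / Real.sqrt (t ^ 2 + a ^ 2))) atTop
      (nhds ((a ^ 2)⁻¹)) := by
  have h0 : Tendsto (fun t : ℝ => a / t) atTop (nhds 0) :=
    tendsto_const_nhds.div_atTop tendsto_id
  have h1 : Tendsto (fun t : ℝ => 1 + (a / t) ^ 2) atTop (nhds 1) := by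
    simpa using tendsto_const_nhds.add (h0.pow 2)
  have h1' : Tendsto (fun t : ℝ => (1 + (a / t) ^ 2)⁻¹) atTop (nhds 1) := by
    simpa using h1.inv₀ (one_ne_zero)
  have h2 : Tendsto (fun t : ℝ => Real.sqrt ((1 + (a / t) ^ 2)⁻¹)) atTop (nhds 1) := by
    have h := (Real.continuous_sqrt.tendsto 1).comp h1'
    rw [Real.sqrt_one] at h
    exact h
  have heq : (fun t : ℝ => Real.sqrt ((1 + (a / t) ^ 2)⁻¹)) =ᶠ[atTop]
      fun t : ℝ => t / Real.sqrt (t ^ 2 + a ^ 2) := by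
    filter_upwards [eventually_gt_atTop (0 : ℝ)] with t ht
    have hpos : 0 < t ^ 2 + a ^ 2 := by positivity
    have : (1 + (a / t) ^ 2)⁻¹ = t ^ 2 / (t ^ 2 + a ^ 2) := by
      field_simp
    rw [this, Real.sqrt_div (by positivity), Real.sqrt_sq ht.le]
  have h3 : Tendsto (fun t : ℝ => t / Real.sqrt (t ^ 2 + a ^ 2)) atTop (nhds 1) :=
    h2.congr' heq
  simpa using h3.const_mul ((a ^ 2)⁻¹)

lemma integral_Ioi_aux {a : ℝ} (ha : 0 < a) :
    ∫ t in Ioi (0 : ℝ), (t ^ 2 + a ^ 2) ^ (-(3 / 2) : ℝ) = (a ^ 2)⁻¹ := by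
  have := integral_Ioi_of_hasDerivAt_of_nonneg' (a := 0)
    (g := fun t : ℝ => (a ^ 2)⁻¹ * (t / Real.sqrt (t ^ 2 + a ^ 2)))
    (g' := fun t : ℝ => (t ^ 2 + a ^ 2) ^ (-(3 / 2) : ℝ))
    (fun x _ => hderiv_aux ha x)
    (fun x _ => Real.rpow_nonneg (by positivity) _) (tendsto_aux ha)
  simpa using this

lemma integrableOn_Ioi_aux {a : ℝ} (ha : 0 < a) :
    IntegrableOn (fun t : ℝ => (t ^ 2 + a ^ 2) ^ (-(3 / 2) : ℝ)) (Ioi 0) := by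
  exact integrableOn_Ioi_deriv_of_nonneg' (fun x _ => hderiv_aux ha x)
    (fun x _ => Real.rpow_nonneg (by positivity) _) (tendsto_aux ha)

lemma integral_line_aux {a : ℝ} (ha : 0 < a) :
    ∫ t : ℝ, (t ^ 2 + a ^ 2) ^ (-(3 / 2) : ℝ) = 2 * (a ^ 2)⁻¹ := by
  have h : (fun t : ℝ => (t ^ 2 + a ^ 2) ^ (-(3 / 2) : ℝ)) =
      fun t : ℝ => (|t| ^ 2 + a ^ 2) ^ (-(3 / 2) : ℝ) := by
    funext t; rw [sq_abs]
  rw [h, integral_comp_abs (f := fun t : ℝ => (t ^ 2 + a ^ 2) ^ (-(3 / 2) : ℝ)),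
    integral_Ioi_aux ha]

lemma integrable_line_aux {a : ℝ} (ha : 0 < a) :
    Integrable (fun t : ℝ => (t ^ 2 + a ^ 2) ^ (-(3 / 2) : ℝ)) := by
  rw [← integrableOn_univ, ← Iio_union_Ici (a := (0 : ℝ)), integrableOn_union,
    integrableOn_Ici_iff_integrableOn_Ioi]
  refine ⟨?_, integrableOn_Ioi_aux ha⟩
  rw [← (Measure.measurePreserving_neg (volume : Measure ℝ)).integrableOn_comp_preimage
      (Homeomorph.neg ℝ).measurableEmbedding]
  simpa only [Function.comp_def, neg_sq, neg_preimage, neg_Iio, neg_zero] using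
    integrableOn_Ioi_aux ha

lemma integral_radial_aux :
    ∫ y in Ioi (0 : ℝ), y * (2 * ((1 + y ^ 2) ^ 2)⁻¹) = 1 := by
  have hderiv : ∀ y : ℝ, HasDerivAt (fun y : ℝ => -((1 + y ^ 2)⁻¹))
      (y * (2 * ((1 + y ^ 2) ^ 2)⁻¹)) y := by
    intro y
    have hb : HasDerivAt (fun y : ℝ => 1 + y ^ 2) (2 * y) y := by
      simpa using (hasDerivAt_pow 2 y).const_add 1
    have hpos : (0 : ℝ) < 1 + y ^ 2 := by positivity
    have := (hb.inv hpos.ne').neg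
    refine this.congr_deriv (Eq.symm ?_)
    field_simp
  have htends : Tendsto (fun y : ℝ => -((1 + y ^ 2)⁻¹)) atTop (nhds 0) := by
    have h1 : Tendsto (fun y : ℝ => 1 + y ^ 2) atTop atTop :=
      tendsto_atTop_add_const_left _ 1 (tendsto_pow_atTop two_ne_zero)
    simpa using (tendsto_inv_atTop_zero.comp h1).neg
  have := integral_Ioi_of_hasDerivAt_of_nonneg' (a := 0)
    (fun x _ => hderiv x) (fun x hx => by have hx' : (0:ℝ) < x := hx; positivity) htends
  simpa using this

lemma integral_outer_aux :
    ∫ z : ℂ, 2 * ((1 + ‖z‖ ^ 2) ^ 2)⁻¹ = 2 * π := by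
  have h := MeasureTheory.integral_fun_norm_addHaar (volume : Measure ℂ)
    (fun y : ℝ => 2 * ((1 + y ^ 2) ^ 2)⁻¹)
  rw [Complex.finrank_real_complex] at h
  rw [h]
  have hball : ((volume : Measure ℂ) (Metric.ball 0 1)).toReal = π := by
    rw [Complex.volume_ball]
    simp [ENNReal.toReal_mul]
  rw [measureReal_def, hball]
  have : ∫ y in Ioi (0 : ℝ), y ^ (2 - 1) • (2 * ((1 + y ^ 2) ^ 2)⁻¹) =
      ∫ y in Ioi (0 : ℝ), y * (2 * ((1 + y ^ 2) ^ 2)⁻¹) := by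
    simp [smul_eq_mul]
  rw [this, integral_radial_aux]
  simp [smul_eq_mul]

lemma integrable_outer_aux :
    Integrable (fun z : ℂ => 2 * ((1 + ‖z‖ ^ 2) ^ 2)⁻¹) := by
  have hint : Integrable (fun z : ℂ => 8 * (1 + ‖z‖) ^ (-(4 : ℝ))) :=
    (integrable_one_add_norm (E := ℂ) (r := 4)
      (by norm_num [Complex.finrank_real_complex])).const_mul 8
  refine hint.mono' ?_ ?_
  · refine Continuous.aestronglyMeasurable ?_
    exact continuous_const.mul (Continuous.inv₀
      (((continuous_const.add (continuous_norm.pow 2)).pow 2))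
      (fun z => by positivity))
  · filter_upwards with z
    set n := ‖z‖ with hn
    have hn0 : 0 ≤ n := norm_nonneg z
    have hp1 : (0 : ℝ) < (1 + n ^ 2) ^ 2 := by positivity
    have hp2 : (0 : ℝ) < (1 + n) ^ 4 := by positivity
    have hrpow : (1 + n) ^ (-(4 : ℝ)) = ((1 + n) ^ (4 : ℕ))⁻¹ := by
      rw [← Real.rpow_natCast (1 + n) 4, ← Real.rpow_neg (by positivity)]
      norm_num
    rw [Real.norm_eq_abs, abs_of_nonneg (by positivity), hrpow]
    rw [show 2 * ((1 + n ^ 2) ^ 2)⁻¹ = 2 / (1 + n ^ 2) ^ 2 by ring,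
      show 8 * ((1 + n) ^ (4 : ℕ))⁻¹ = 8 / (1 + n) ^ 4 by ring,
      div_le_div_iff₀ hp1 hp2]
    nlinarith [mul_nonneg (sq_nonneg (n - 1)) (by positivity : (0 : ℝ) ≤ 3 * n ^ 2 + 2 * n + 3)]

lemma integrable_cube_aux :
    Integrable (fun p : ℂ × ℝ => (p.2 ^ 2 + (1 + ‖p.1‖ ^ 2) ^ 2) ^ (-(3 / 2) : ℝ))
      ((volume : Measure ℂ).prod (volume : Measure ℝ)) := by
  have hmeas : AEStronglyMeasurable
      (fun p : ℂ × ℝ => (p.2 ^ 2 + (1 + ‖p.1‖ ^ 2) ^ 2) ^ (-(3 / 2) : ℝ))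
      ((volume : Measure ℂ).prod (volume : Measure ℝ)) := by
    refine Continuous.aestronglyMeasurable ?_
    refine Continuous.rpow_const ?_ (fun p => Or.inl (by positivity))
    exact (continuous_snd.pow 2).add
      ((continuous_const.add ((continuous_fst.norm).pow 2)).pow 2)
  rw [integrable_prod_iff hmeas]
  constructor
  · filter_upwards with x
    have hA : (0 : ℝ) < 1 + ‖x‖ ^ 2 := by positivity
    exact integrable_line_aux hA
  · have heq : ∀ x : ℂ, (∫ y : ℝ, ‖(y ^ 2 + (1 + ‖x‖ ^ 2) ^ 2) ^ (-(3 / 2) : ℝ)‖) =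
        2 * ((1 + ‖x‖ ^ 2) ^ 2)⁻¹ := by
      intro x
      have hA : (0 : ℝ) < 1 + ‖x‖ ^ 2 := by positivity
      have : ∀ y : ℝ, ‖(y ^ 2 + (1 + ‖x‖ ^ 2) ^ 2) ^ (-(3 / 2) : ℝ)‖ =
          (y ^ 2 + (1 + ‖x‖ ^ 2) ^ 2) ^ (-(3 / 2) : ℝ) := fun y =>
        Real.norm_of_nonneg (Real.rpow_nonneg (by positivity) _)
      simp_rw [this]
      rw [integral_line_aux hA]
    refine (integrable_outer_aux.congr ?_)
    filter_upwards with x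
    exact (heq x).symm

theorem integral_jerisonLeeBubble_cube :
    ∫ p : ℂ × ℝ, (jerisonLeeBubble p) ^ 3 = 2 * π := by
  have hcube : ∀ p : ℂ × ℝ, (jerisonLeeBubble p) ^ 3 =
      (p.2 ^ 2 + (1 + ‖p.1‖ ^ 2) ^ 2) ^ (-(3 / 2) : ℝ) := by
    intro p
    unfold jerisonLeeBubble
    have hp : (0 : ℝ) < p.2 ^ 2 + (1 + ‖p.1‖ ^ 2) ^ 2 := by positivity
    rw [← Real.rpow_natCast ((p.2 ^ 2 + (1 + ‖p.1‖ ^ 2) ^ 2) ^ (-(1 / 2 : ℝ))) 3,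
      ← Real.rpow_mul hp.le]
    norm_num
  simp_rw [hcube]
  rw [MeasureTheory.Measure.volume_eq_prod, MeasureTheory.integral_prod _ integrable_cube_aux]
  have hinner : ∀ x : ℂ, (∫ y : ℝ, (y ^ 2 + (1 + ‖x‖ ^ 2) ^ 2) ^ (-(3 / 2) : ℝ)) =
      2 * ((1 + ‖x‖ ^ 2) ^ 2)⁻¹ := fun x =>
    integral_line_aux (by positivity)
  simp_rw [hinner]
  exact integral_outer_aux
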